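/- Let a, c ∈ ℝⁿ be nonzero linearly independent and b_a, b_c ∈ ℝ, x ∈ ℝⁿ with ⟨c, x⟩ = b_c. Define the oblique projection direction d = a − (⟨a,c⟩/‖c‖²) c and set x⁺_obl = x − ((⟨a,x⟩ − b_a)/⟨a,d⟩) d (assuming ⟨a,d⟩ ≠ 0). Define x⁺_in as the inertial Kaczmarz update: β = ⟨a,c⟩(⟨a,x⟩−b_a)/(‖a‖²‖c‖²−⟨a,c⟩²), w = x + βc, x⁺_in = w − ((⟨a,w⟩−b_a)/‖a‖²)a. Then x⁺_obl = x⁺_in. -/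

import Mathlib

open RealInnerProductSpace

private lemma aux_vec {V : Type*} [AddCommGroup V] [Module ℝ V]
    (x a c : V) (A C K X ba : ℝ) (hA : A ≠ 0) (hC : C ≠ 0)
    (hD : A * C - K ^ 2 ≠ 0) :
    x - ((X - ba) / ((A * C - K ^ 2) / C)) • (a - (K / C) • c) =
      (x + (K * (X - ba) / (A * C - K ^ 2)) • c) -
        ((X + K * (X - ba) / (A * C - K ^ 2) * K - ba) / A) • a := by
  match_scalars <;> field_simp <;> ring

/-- Equivalence of the oblique projection technique and the multi-step inertial
extrapolation approach: both produce the same next iterate. -/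
theorem stmt_15 {n : ℕ} (a c : EuclideanSpace ℝ (Fin n)) (ha : a ≠ 0) (hc : c ≠ 0)
    (hind : LinearIndependent ℝ ![a, c]) (ba bc : ℝ)
    (x : EuclideanSpace ℝ (Fin n)) (hx : ⟪c, x⟫ = bc) :
    let d := a - (⟪a, c⟫ / ‖c‖ ^ 2) • c
    let xobl := x - ((⟪a, x⟫ - ba) / ⟪a, d⟫) • d
    let β : ℝ := ⟪a, c⟫ * (⟪a, x⟫ - ba) / (‖a‖ ^ 2 * ‖c‖ ^ 2 - ⟪a, c⟫ ^ 2)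
    let w := x + β • c
    let xin := w - ((⟪a, w⟫ - ba) / ‖a‖ ^ 2) • a
    ⟪a, d⟫ ≠ 0 → xobl = xin := by
  intro d xobl β w xin had
  have hA : ‖a‖ ^ 2 ≠ 0 := pow_ne_zero 2 (norm_ne_zero_iff.mpr ha)
  have hC : ‖c‖ ^ 2 ≠ 0 := pow_ne_zero 2 (norm_ne_zero_iff.mpr hc)
  have hd : ⟪a, d⟫ = (‖a‖ ^ 2 * ‖c‖ ^ 2 - ⟪a, c⟫ ^ 2) / ‖c‖ ^ 2 := by
    simp only [d, inner_sub_right, real_inner_smul_right,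
      real_inner_self_eq_norm_sq]
    field_simp
  have hD : ‖a‖ ^ 2 * ‖c‖ ^ 2 - ⟪a, c⟫ ^ 2 ≠ 0 := by
    intro h
    rw [hd, h] at had
    simp at had
  have hw : ⟪a, w⟫ = ⟪a, x⟫ + β * ⟪a, c⟫ := by
    rw [inner_add_right, real_inner_smul_right]
  show x - ((⟪a, x⟫ - ba) / ⟪a, d⟫) • d =
      (x + β • c) - ((⟪a, w⟫ - ba) / ‖a‖ ^ 2) • a
  rw [hw, hd]
  exact aux_vec x a c (‖a‖ ^ 2) (‖c‖ ^ 2) ⟪a, c⟫ ⟪a, x⟫ ba hA hC hD
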